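/- Let T be a tree, let w : V(T) → ℕ, let t ≥ 1 be a real number, and let ε be a real number with 0 < ε ≤ 1/3 such that w(u) ≥ t/ε for every vertex u of T. Define w⁻(u) = ⌊w(u)/t⌋ and w⁺(u) = ⌈w(u)/t⌉ for every vertex u. Then for every nonempty connected w-safe set S in T there is a nonempty connected (w⁻,w⁺)-safe set S′ in T with S ⊆ S′ and w⁻(S′) ≤ (1 + 3ε)·w⁻(S) + max{w⁻(u) : u ∈ V(T)}. -/
import Mathlib


/-- Total weight of a set of vertices. -/
noncomputable def setWeight {V : Type*} (w : V → ℕ) (A : Set V) : ℕ := ∑ᶠ u ∈ A, w u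

/-- `C` is the vertex set of a connected component of the subgraph of `G` induced by `S`. -/
def IsCompOf {V : Type*} (G : SimpleGraph V) (S C : Set V) : Prop :=
  C ⊆ S ∧ (G.induce C).Connected ∧ ∀ u ∈ C, ∀ v ∈ S, G.Adj u v → v ∈ C

/-- `S` is a (nonempty) `(w⁻,w⁺)`-safe set of `G`: every component `D` of `G - S` adjacent to
a component `C` of `G[S]` satisfies `w⁺(D) ≤ w⁻(C)`. -/
def IsSafePair {V : Type*} (G : SimpleGraph V) (wm wp : V → ℕ) (S : Set V) : Prop :=
  S.Nonempty ∧ ∀ C D : Set V, IsCompOf G S C → IsCompOf G Sᶜ D →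
    (∃ u ∈ C, ∃ v ∈ D, G.Adj u v) → setWeight wp D ≤ setWeight wm C

/-- `S` is a (nonempty) `w`-safe set of `G`. -/
def IsSafeSet {V : Type*} (G : SimpleGraph V) (w : V → ℕ) (S : Set V) : Prop :=
  IsSafePair G w w S

section Aux
variable {V : Type*}

lemma setWeight_eq_sum [Fintype V] (w : V → ℕ) (A : Set V) :
    setWeight w A = ∑ u ∈ (Set.toFinite A).toFinset, w u := by
  rw [setWeight, ← finsum_mem_coe_finset, Set.Finite.coe_toFinset]

lemma setWeight_mono [Fintype V] (w : V → ℕ) {A B : Set V} (h : A ⊆ B) :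
    setWeight w A ≤ setWeight w B := by
  rw [setWeight_eq_sum, setWeight_eq_sum]
  exact Finset.sum_le_sum_of_subset (by simpa using h)

lemma setWeight_insert [Fintype V] (w : V → ℕ) {A : Set V} {v : V} (hv : v ∉ A) :
    setWeight w (A ∪ {v}) = setWeight w A + w v := by
  rw [setWeight, finsum_mem_union (by simpa using hv) (Set.toFinite A) (Set.toFinite {v}),
    finsum_mem_singleton]
  rfl

lemma setWeight_le_mul [Fintype V] {w1 w2 : V → ℕ} {c : ℝ}
    (h : ∀ u, (w1 u : ℝ) ≤ c * w2 u) (A : Set V) :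
    (setWeight w1 A : ℝ) ≤ c * (setWeight w2 A : ℝ) := by
  rw [setWeight_eq_sum, setWeight_eq_sum]
  push_cast
  rw [Finset.mul_sum]
  exact Finset.sum_le_sum fun i _ => h i

lemma mul_le_setWeight [Fintype V] {w1 w2 : V → ℕ} {c : ℝ}
    (h : ∀ u, c * w2 u ≤ (w1 u : ℝ)) (A : Set V) :
    c * (setWeight w2 A : ℝ) ≤ (setWeight w1 A : ℝ) := by
  rw [setWeight_eq_sum, setWeight_eq_sum]
  push_cast
  rw [Finset.mul_sum]
  exact Finset.sum_le_sum fun i _ => h i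

variable (G : SimpleGraph V)

lemma mem_of_reachable {A C : Set V}
    (hcl : ∀ u ∈ C, ∀ v ∈ A, G.Adj u v → v ∈ C) :
    ∀ {x y : ↥A}, (G.induce A).Reachable x y → x.1 ∈ C → y.1 ∈ C := by
  intro x y h
  obtain ⟨p⟩ := h
  induction p with
  | nil => exact id
  | cons h p ih => intro hx; exact ih (hcl _ hx _ (Subtype.mem _) h)

lemma reachable_mono {A B : Set V} (hAB : A ⊆ B) :
    ∀ {x y : ↥A}, (G.induce A).Reachable x y →
      (G.induce B).Reachable ⟨x.1, hAB x.2⟩ ⟨y.1, hAB y.2⟩ := by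
  intro x y h
  obtain ⟨p⟩ := h
  induction p with
  | nil => exact SimpleGraph.Reachable.refl _
  | cons h p ih =>
      refine (SimpleGraph.Adj.reachable ?_).trans ih
      exact (show (G.induce B).Adj ⟨_, _⟩ ⟨_, _⟩ from h)

lemma subset_comp_of_closed {A D' D : Set V}
    (hD'A : D' ⊆ A) (hconn' : (G.induce D').Connected)
    (hcl : ∀ u ∈ D, ∀ v ∈ A, G.Adj u v → v ∈ D)
    {x : V} (hxD' : x ∈ D') (hxD : x ∈ D) : D' ⊆ D := by
  intro y hy
  have h := hconn'.preconnected ⟨x, hxD'⟩ ⟨y, hy⟩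
  exact mem_of_reachable G (fun u hu v hv hadj => hcl u hu v (hD'A hv) hadj) h hxD

lemma comp_eq_of_connected {S C : Set V} (hconn : (G.induce S).Connected)
    (hC : IsCompOf G S C) : C = S := by
  obtain ⟨hCS, hCconn, hcl⟩ := hC
  obtain ⟨⟨c, hc⟩⟩ := hCconn.nonempty
  exact le_antisymm hCS (subset_comp_of_closed G subset_rfl hconn hcl (hCS hc) hc)

lemma exists_comp {A : Set V} {u : V} (hu : u ∈ A) :
    ∃ D, u ∈ D ∧ IsCompOf G A D := by
  set D : Set V := {v | ∃ hv : v ∈ A, (G.induce A).Reachable ⟨u, hu⟩ ⟨v, hv⟩} with hD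
  have hDA : D ⊆ A := fun v hv => hv.1
  have huD : u ∈ D := ⟨hu, SimpleGraph.Reachable.refl _⟩
  have key : ∀ (x y : ↥A), (G.induce A).Walk x y → ∀ hx : x.1 ∈ D,
      ∃ hy : y.1 ∈ D, (G.induce D).Reachable ⟨x.1, hx⟩ ⟨y.1, hy⟩ := by
    intro x y p
    induction p with
    | nil => exact fun hx => ⟨hx, SimpleGraph.Reachable.refl _⟩
    | @cons a b c h p ih =>
        intro hx
        have hbD : b.1 ∈ D := by
          obtain ⟨hxA, hr⟩ := hx
          exact ⟨b.2, (hr.trans (SimpleGraph.Adj.reachable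
            (show (G.induce A).Adj ⟨a.1, hxA⟩ b from h)))⟩
        obtain ⟨hy, hr⟩ := ih hbD
        refine ⟨hy, (SimpleGraph.Adj.reachable ?_).trans hr⟩
        exact (show (G.induce D).Adj ⟨_, hx⟩ ⟨_, hbD⟩ from h)
  refine ⟨D, huD, hDA, ?_, ?_⟩
  · rw [SimpleGraph.connected_iff]
    refine ⟨?_, ⟨⟨u, huD⟩⟩⟩
    have reachu : ∀ z : ↥D, (G.induce D).Reachable ⟨u, huD⟩ z := by
      intro z
      obtain ⟨hzA, hr⟩ := z.2
      obtain ⟨p⟩ := hr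
      obtain ⟨hy, hr'⟩ := key ⟨u, hu⟩ ⟨z.1, hzA⟩ p huD
      exact hr'
    intro x y
    exact (reachu x).symm.trans (reachu y)
  · intro v hv w hw hadj
    obtain ⟨hvA, hr⟩ := hv
    exact ⟨hw, hr.trans (SimpleGraph.Adj.reachable
      (show (G.induce A).Adj ⟨v, hvA⟩ ⟨w, hw⟩ from hadj))⟩

lemma comp_adj_set (hpre : G.Preconnected) {S D : Set V}
    (hcomp : IsCompOf G Sᶜ D) {v : V} (hv : v ∈ D) {s : V} (hs : s ∈ S) :
    ∃ a ∈ S, ∃ b ∈ D, G.Adj a b := by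
  obtain ⟨p⟩ := hpre v s
  clear hpre
  have key : ∀ (x y : V) (_ : G.Walk x y), x ∈ D → y ∈ S → ∃ a ∈ S, ∃ b ∈ D, G.Adj a b := by
    intro x y p
    induction p with
    | nil => exact fun hv hs => absurd hs (hcomp.1 hv)
    | @cons a b c h p ih =>
        intro hv hs
        by_cases hb : b ∈ S
        · exact ⟨b, hb, a, hv, h.symm⟩
        · exact ih (hcomp.2.2 a hv b hb h) hs
  exact key v s p hv hs

lemma connected_insert {A : Set V} (hA : (G.induce A).Connected) {u v : V}
    (hu : u ∈ A) (hadj : G.Adj u v) : (G.induce (A ∪ {v})).Connected := by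
  rw [SimpleGraph.connected_iff]
  have hsub : A ⊆ A ∪ {v} := Set.subset_union_left
  have hvm : v ∈ A ∪ {v} := Set.mem_union_right _ rfl
  refine ⟨?_, ⟨⟨u, hsub hu⟩⟩⟩
  have reachu : ∀ z : ↥(A ∪ {v}), (G.induce (A ∪ {v})).Reachable z ⟨u, hsub hu⟩ := by
    rintro ⟨z, hz | hz⟩
    · exact reachable_mono G hsub (hA.preconnected ⟨z, hz⟩ ⟨u, hu⟩)
    · rw [Set.mem_singleton_iff] at hz
      have hz' : z ∈ A ∪ {v} := by rw [hz]; exact hvm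
      refine SimpleGraph.Adj.reachable
        (show (G.induce (A ∪ {v})).Adj ⟨z, hz'⟩ ⟨u, hsub hu⟩ from ?_)
      show G.Adj z u
      rw [hz]
      exact hadj.symm
  intro x y
  exact (reachu x).trans (reachu y).symm

end Aux

theorem exists_safePair_superset {V : Type*} [Fintype V] (G : SimpleGraph V)
    (hT : G.IsTree) (w : V → ℕ) (t ε : ℝ) (ht : 1 ≤ t) (hε0 : 0 < ε) (hε : ε ≤ 1 / 3)
    (hw : ∀ u : V, t / ε ≤ (w u : ℝ))
    (wm wp : V → ℕ)
    (hwm : ∀ u, wm u = ⌊(w u : ℝ) / t⌋₊) (hwp : ∀ u, wp u = ⌈(w u : ℝ) / t⌉₊)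
    (S : Set V) (hsafe : IsSafeSet G w S) (hconn : (G.induce S).Connected) :
    ∃ S' : Set V, S ⊆ S' ∧ IsSafePair G wm wp S' ∧ (G.induce S').Connected ∧
      (setWeight wm S' : ℝ) ≤ (1 + 3 * ε) * (setWeight wm S : ℝ) + ((⨆ u, wm u : ℕ) : ℝ) := by
  classical
  obtain ⟨hSne, hsafeS⟩ := hsafe
  have ht0 : (0:ℝ) < t := lt_of_lt_of_le one_pos ht
  obtain ⟨s0, hs0⟩ := hSne
  haveI : Nonempty V := ⟨s0⟩
  set M : ℕ := ⨆ u, wm u with hMdef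
  have hMv : ∀ v : V, wm v ≤ M := fun v =>
    le_ciSup (Set.Finite.bddAbove (Set.finite_range wm)) v
  have hwq : ∀ u : V, (1:ℝ) ≤ ε * w u / t := by
    intro u
    rw [le_div_iff₀ ht0, one_mul]
    have := (div_le_iff₀ hε0).mp (hw u)
    linarith
  have hwp_pt : ∀ u : V, (wp u : ℝ) ≤ (1+ε)/t * w u := by
    intro u
    rw [hwp u]
    have h1 : (⌈(w u : ℝ)/t⌉₊ : ℝ) < (w u : ℝ)/t + 1 :=
      Nat.ceil_lt_add_one (by positivity)
    have h2 : (1+ε)/t * w u = (w u : ℝ)/t + ε * w u / t := by ring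
    linarith [hwq u]
  have hwm_pt : ∀ u : V, (1-ε)/t * w u ≤ (wm u : ℝ) := by
    intro u
    rw [hwm u]
    have h1 : (w u : ℝ)/t - 1 < (⌊(w u : ℝ)/t⌋₊ : ℝ) := Nat.sub_one_lt_floor _
    have h2 : (1-ε)/t * w u = (w u : ℝ)/t - ε * w u / t := by ring
    linarith [hwq u]
  set W : ℕ := setWeight w S with hWdef
  have hWmS : (1-ε)/t * (W:ℝ) ≤ (setWeight wm S : ℝ) := mul_le_setWeight hwm_pt S
  have hSS : IsCompOf G S S := ⟨subset_rfl, hconn, fun _ _ v hv _ => hv⟩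
  have hDbound : ∀ D₀ : Set V, IsCompOf G Sᶜ D₀ → setWeight w D₀ ≤ W := by
    intro D₀ hcomp
    obtain ⟨⟨v, hv⟩⟩ := hcomp.2.1.nonempty
    obtain ⟨a, ha, b, hb, hab⟩ := comp_adj_set G hT.isConnected.preconnected hcomp hv hs0
    exact hsafeS S D₀ hSS hcomp ⟨a, ha, b, hb, hab⟩
  set B : ℝ := max ((setWeight wm S : ℝ)) ((1+ε)/t * (W:ℝ) + M) with hBdef
  have step : ∀ S' : Set V, S ⊆ S' → (G.induce S').Connected → ¬ IsSafePair G wm wp S' →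
      ∃ b : V, b ∉ S' ∧ (G.induce (S' ∪ {b})).Connected ∧
        (setWeight wm (S' ∪ {b}) : ℝ) ≤ B := by
    intro S' hSS' hconn' hns
    rw [IsSafePair, not_and] at hns
    have hx := hns ⟨s0, hSS' hs0⟩
    push_neg at hx
    obtain ⟨C, D, hC, hD, ⟨⟨a, haC, b, hbD, hab⟩, hlt⟩⟩ := hx
    have hCeq : C = S' := comp_eq_of_connected G hconn' hC
    rw [hCeq] at hlt haC
    have hbS' : b ∉ S' := hD.1 hbD
    have hScc : S'ᶜ ⊆ Sᶜ := Set.compl_subset_compl.mpr hSS'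
    obtain ⟨D₀, hbD₀, hD₀⟩ := exists_comp G (hScc (hD.1 hbD))
    have hDsub : D ⊆ D₀ :=
      subset_comp_of_closed G (hD.1.trans hScc) hD.2.1 hD₀.2.2 hbD hbD₀
    have h1 : (setWeight wm S' : ℝ) < setWeight wp D := by exact_mod_cast hlt
    have h2 : (setWeight wp D : ℝ) ≤ setWeight wp D₀ := by
      exact_mod_cast setWeight_mono wp hDsub
    have h3 : (setWeight wp D₀ : ℝ) ≤ (1+ε)/t * setWeight w D₀ := setWeight_le_mul hwp_pt D₀
    have h4 : (setWeight w D₀ : ℝ) ≤ (W:ℝ) := by exact_mod_cast hDbound D₀ hD₀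
    have h4' : (1+ε)/t * (setWeight w D₀ : ℝ) ≤ (1+ε)/t * (W:ℝ) := by
      apply mul_le_mul_of_nonneg_left h4 (by positivity)
    have hMb : (wm b : ℝ) ≤ (M:ℝ) := by exact_mod_cast hMv b
    refine ⟨b, hbS', connected_insert G hconn' haC hab, ?_⟩
    rw [setWeight_insert wm hbS']
    push_cast
    have : (setWeight wm S' : ℝ) + wm b ≤ (1+ε)/t * (W:ℝ) + M := by linarith
    exact this.trans (le_max_right _ _)
  have main : ∀ n : ℕ, ∀ S' : Set V, S'ᶜ.ncard ≤ n → S ⊆ S' →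
      (G.induce S').Connected → (setWeight wm S' : ℝ) ≤ B →
      ∃ S'', S ⊆ S'' ∧ IsSafePair G wm wp S'' ∧ (G.induce S'').Connected ∧
        (setWeight wm S'' : ℝ) ≤ B := by
    intro n
    induction n with
    | zero =>
        intro S' hcard hSS' hconn' hB
        by_cases hsafe' : IsSafePair G wm wp S'
        · exact ⟨S', hSS', hsafe', hconn', hB⟩
        · obtain ⟨b, hbS', _, _⟩ := step S' hSS' hconn' hsafe'
          exfalso
          have hempty : S'ᶜ = ∅ := by
            rw [← Set.ncard_eq_zero (Set.toFinite _)]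
            omega
          exact hbS' (by simpa [hempty] using (Set.mem_compl_iff S' b))
    | succ n ih =>
        intro S' hcard hSS' hconn' hB
        by_cases hsafe' : IsSafePair G wm wp S'
        · exact ⟨S', hSS', hsafe', hconn', hB⟩
        · obtain ⟨b, hbS', hconn'', hB''⟩ := step S' hSS' hconn' hsafe'
          have hceq : (S' ∪ {b})ᶜ = S'ᶜ \ {b} := by
            ext x; simp [not_or, and_comm]
          have hlt : (S' ∪ {b})ᶜ.ncard < S'ᶜ.ncard := by
            rw [hceq]
            exact Set.ncard_diff_singleton_lt_of_mem hbS' (Set.toFinite _)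
          exact ih (S' ∪ {b}) (by omega) (hSS'.trans Set.subset_union_left) hconn'' hB''
  obtain ⟨S'', h1, h2, h3, h4⟩ := main (Sᶜ.ncard) S le_rfl subset_rfl hconn (le_max_left _ _)
  refine ⟨S'', h1, h2, h3, h4.trans ?_⟩
  have hM0 : (0:ℝ) ≤ (M:ℝ) := Nat.cast_nonneg M
  have hwmS0 : (0:ℝ) ≤ (setWeight wm S : ℝ) := Nat.cast_nonneg _
  have hq0 : (0:ℝ) ≤ (W:ℝ)/t := by positivity
  apply max_le
  · nlinarith
  · have key : (1+ε)/t*(W:ℝ) ≤ (1+3*ε)*(setWeight wm S:ℝ) := by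
      have ha : (1+3*ε) * ((1-ε)/t * (W:ℝ)) ≤ (1+3*ε) * (setWeight wm S : ℝ) :=
        mul_le_mul_of_nonneg_left hWmS (by linarith)
      have hb : (1+ε)/t*(W:ℝ) ≤ (1+3*ε) * ((1-ε)/t * (W:ℝ)) := by
        have hr : (1+3*ε)*((1-ε)/t*(W:ℝ)) - (1+ε)/t*(W:ℝ) = (ε*(1-3*ε)) * ((W:ℝ)/t) := by
          ring
        nlinarith [mul_nonneg (mul_nonneg hε0.le (by linarith : (0:ℝ) ≤ 1-3*ε)) hq0]
      linarith
    linarith
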